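/- Let γ > 0 and let k : [0,∞) → [0,∞) be a continuous, strictly increasing function with k(0) = γ and k(x) → +∞ as x → +∞. Let φ : [0,∞) → [0,∞) be the inverse of the map x ↦ k(x)(exp(γx) − 1), i.e. k(φ(x))·(exp(γ·φ(x)) − 1) = x for all x ≥ 0. Define Λ(x) := (1/γ)·x·ln x − ∫₀ˣ φ(u) du for x > 0. Then Λ(x)/x → +∞ as x → +∞. -/

import Mathlib

open Filter Real

theorem Lambda_superlinear
    (γ : ℝ) (hγ : 0 < γ) (k φ : ℝ → ℝ)
    (hk_cont : ContinuousOn k (Set.Ici 0))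
    (hk_mono : StrictMonoOn k (Set.Ici 0))
    (hk_nonneg : ∀ x ≥ (0 : ℝ), 0 ≤ k x)
    (hk0 : k 0 = γ)
    (hk_top : Tendsto k atTop atTop)
    (hφ_nonneg : ∀ x ≥ (0 : ℝ), 0 ≤ φ x)
    (hφ_inv : ∀ x ≥ (0 : ℝ), k (φ x) * (Real.exp (γ * φ x) - 1) = x) :
    Tendsto (fun x => ((1 / γ) * x * Real.log x - ∫ u in (0 : ℝ)..x, φ u) / x)
      atTop atTop := by
  have hγ' : (0:ℝ) < 1/γ := one_div_pos.mpr hγ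
  have hkpos : ∀ y ≥ (0:ℝ), 0 < k y := by
    intro y hy
    rcases eq_or_lt_of_le hy with h | h
    · rw [← h, hk0]; exact hγ
    · have := hk_mono (Set.mem_Ici.mpr le_rfl) hy.le h
      rw [hk0] at this; linarith
  -- Ψ := y ↦ k y * (exp (γ y) - 1) is strictly monotone
  have hΨmono : StrictMonoOn (fun y => k y * (Real.exp (γ * y) - 1)) (Set.Ici 0) := by
    intro a ha b hb hab
    simp only
    have hea : (0:ℝ) ≤ Real.exp (γ * a) - 1 := by
      have : (1:ℝ) ≤ Real.exp (γ * a) :=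
        Real.one_le_exp (mul_nonneg hγ.le (Set.mem_Ici.mp ha))
      linarith
    have h1 : Real.exp (γ * a) - 1 < Real.exp (γ * b) - 1 := by
      have := Real.exp_lt_exp.mpr (mul_lt_mul_of_pos_left hab hγ)
      linarith
    calc k a * (Real.exp (γ * a) - 1) ≤ k b * (Real.exp (γ * a) - 1) :=
          mul_le_mul_of_nonneg_right (hk_mono ha hb hab).le hea
      _ < k b * (Real.exp (γ * b) - 1) :=
          mul_lt_mul_of_pos_left h1 (hkpos b hb)
  -- φ is strictly monotone
  have hφmono : StrictMonoOn φ (Set.Ici 0) := by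
    intro a ha b hb hab
    by_contra h
    push_neg at h
    have hle : k (φ b) * (Real.exp (γ * φ b) - 1) ≤ k (φ a) * (Real.exp (γ * φ a) - 1) := by
      rcases eq_or_lt_of_le h with he | hl
      · rw [he]
      · exact (hΨmono (hφ_nonneg b hb) (hφ_nonneg a ha) hl).le
    rw [hφ_inv a ha, hφ_inv b hb] at hle
    exact absurd hle (not_le.mpr hab)
  -- integrability of φ on nonnegative intervals
  have hint : ∀ a b : ℝ, 0 ≤ a → a ≤ b → IntervalIntegrable φ MeasureTheory.volume a b := by
    intro a b ha hab
    have hsub : Set.uIcc a b ⊆ Set.Ici 0 := by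
      rw [Set.uIcc_of_le hab]
      exact fun z hz => le_trans ha hz.1
    exact ((hφmono.monotoneOn).mono hsub).intervalIntegrable
  rw [tendsto_atTop]
  intro M
  set C : ℝ := 2 * Real.exp (γ * (M + 1)) with hCdef
  have hCpos : 0 < C := by positivity
  obtain ⟨y₀, hy₀⟩ := eventually_atTop.1 (hk_top.eventually_ge_atTop C)
  set y₁ : ℝ := max y₀ 0 with hy₁def
  have hy₁0 : (0:ℝ) ≤ y₁ := le_max_right _ _
  set u₀ : ℝ := max (max C 1) (k y₁ * (Real.exp (γ * y₁) - 1)) with hu₀def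
  have hu₀C : C ≤ u₀ := le_trans (le_max_left _ _) (le_max_left _ _)
  have hu₀1 : (1:ℝ) ≤ u₀ := le_trans (le_max_right _ _) (le_max_left _ _)
  have hu₀0 : (0:ℝ) ≤ u₀ := by linarith
  have hu₀Ψ : k y₁ * (Real.exp (γ * y₁) - 1) ≤ u₀ := le_max_right _ _
  -- pointwise bound for u ≥ u₀
  have hbound : ∀ u : ℝ, u₀ ≤ u → φ u ≤ (1/γ) * Real.log u - (M + 1) := by
    intro u hu
    have hupos : 0 < u := lt_of_lt_of_le one_pos (le_trans hu₀1 hu)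
    have hu0 : (0:ℝ) ≤ u := hupos.le
    have hφy₁ : y₁ ≤ φ u := by
      by_contra h
      push_neg at h
      have h2 := hΨmono (hφ_nonneg u hu0) (Set.mem_Ici.mpr hy₁0) h
      simp only at h2
      rw [hφ_inv u hu0] at h2
      linarith [le_trans hu₀Ψ hu]
    have hkφ : C ≤ k (φ u) := hy₀ (φ u) (le_trans (le_max_left _ _) hφy₁)
    have hexp1 : (0:ℝ) ≤ Real.exp (γ * φ u) - 1 := by
      have : (1:ℝ) ≤ Real.exp (γ * φ u) :=
        Real.one_le_exp (mul_nonneg hγ.le (hφ_nonneg u hu0))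
      linarith
    have hCe : C * (Real.exp (γ * φ u) - 1) ≤ u :=
      (mul_le_mul_of_nonneg_right hkφ hexp1).trans_eq (hφ_inv u hu0)
    have huC1 : (1:ℝ) ≤ u / C := (one_le_div hCpos).mpr (le_trans hu₀C hu)
    have he2 : Real.exp (γ * φ u) ≤ 2 * u / C := by
      have h1 : Real.exp (γ * φ u) - 1 ≤ u / C := by
        rw [le_div_iff₀ hCpos]; linarith [hCe]
      have : Real.exp (γ * φ u) ≤ 1 + u / C := by linarith
      have h2 : 1 + u / C ≤ 2 * u / C := by
        have : 2 * u / C = u / C + u / C := by ring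
        linarith
      linarith
    have hpos2 : (0:ℝ) < 2 * u / C := by positivity
    have hlog : γ * φ u ≤ Real.log (2 * u / C) :=
      (Real.le_log_iff_exp_le hpos2).mpr he2
    have hC2 : C / 2 = Real.exp (γ * (M + 1)) := by rw [hCdef]; ring
    have hlogeq : Real.log (2 * u / C) = Real.log u - γ * (M + 1) := by
      have h3 : 2 * u / C = u / (C / 2) := by
        field_simp
      rw [h3, Real.log_div (ne_of_gt hupos) (by positivity), hC2, Real.log_exp]
    rw [hlogeq] at hlog
    have h4 := mul_le_mul_of_nonneg_left hlog hγ'.le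
    have e1 : (1/γ) * (γ * φ u) = φ u := by field_simp
    have e2 : (1/γ) * (Real.log u - γ * (M + 1)) = (1/γ) * Real.log u - (M + 1) := by
      field_simp
    rw [e1, e2] at h4
    linarith
  set A : ℝ := ∫ u in (0:ℝ)..u₀, φ u with hAdef
  have hA0 : 0 ≤ A := by
    apply intervalIntegral.integral_nonneg hu₀0
    intro u hu
    exact hφ_nonneg u hu.1
  refine eventually_atTop.2 ⟨max u₀ (max A (Real.exp (γ * (M + 1)))), fun x hx => ?_⟩
  have hxu₀ : u₀ ≤ x := le_trans (le_max_left _ _) hx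
  have hxA : A ≤ x := le_trans (le_trans (le_max_left _ _) (le_max_right _ _)) hx
  have hxe : Real.exp (γ * (M + 1)) ≤ x :=
    le_trans (le_trans (le_max_right _ _) (le_max_right _ _)) hx
  have hxpos : 0 < x := lt_of_lt_of_le one_pos (le_trans hu₀1 hxu₀)
  have hi1 : IntervalIntegrable φ MeasureTheory.volume 0 u₀ := hint 0 u₀ le_rfl hu₀0
  have hi2 : IntervalIntegrable φ MeasureTheory.volume u₀ x := hint u₀ x hu₀0 hxu₀
  have hsplit : (∫ u in (0:ℝ)..x, φ u) = A + ∫ u in u₀..x, φ u :=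
    (intervalIntegral.integral_add_adjacent_intervals hi1 hi2).symm
  -- log x ≥ γ(M+1)
  have hlx : γ * (M + 1) ≤ Real.log x := by
    have := Real.log_le_log (Real.exp_pos _) hxe
    rwa [Real.log_exp] at this
  have hc0 : (0:ℝ) ≤ (1/γ) * Real.log x - (M + 1) := by
    have h5 := mul_le_mul_of_nonneg_left hlx hγ'.le
    have e3 : (1/γ) * (γ * (M + 1)) = M + 1 := by field_simp
    linarith [e3 ▸ h5]
  have hI2 : (∫ u in u₀..x, φ u) ≤ (x - u₀) * ((1/γ) * Real.log x - (M + 1)) := by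
    have hm : (∫ u in u₀..x, φ u) ≤ ∫ _u in u₀..x, ((1/γ) * Real.log x - (M + 1)) := by
      apply intervalIntegral.integral_mono_on hxu₀ hi2 intervalIntegrable_const
      intro u hu
      have h1 := hbound u hu.1
      have hupos : 0 < u := lt_of_lt_of_le (by linarith) hu.1
      have hlu : Real.log u ≤ Real.log x := Real.log_le_log hupos hu.2
      nlinarith
    have hconst : (∫ _u in u₀..x, ((1/γ) * Real.log x - (M + 1)))
        = (x - u₀) * ((1/γ) * Real.log x - (M + 1)) := by
      rw [intervalIntegral.integral_const, smul_eq_mul]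
    linarith [hconst ▸ hm]
  have hI2' : (∫ u in u₀..x, φ u) ≤ x * ((1/γ) * Real.log x - (M + 1)) := by
    have := mul_le_mul_of_nonneg_right (show x - u₀ ≤ x by linarith) hc0
    linarith
  rw [le_div_iff₀ hxpos]
  rw [hsplit]
  have hring : x * ((1/γ) * Real.log x - (M + 1))
      = (1/γ) * x * Real.log x - x * (M + 1) := by ring
  linarith [hI2', hring ▸ hI2']
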